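/- Let A₁, …, A_k be complex symmetric m×m matrices satisfying A_iA_j + A_jA_i = 0 for all i, j (including i = j), and suppose not all A_i are zero. Then there exists a nonzero vector w ∈ ℂ^m with wᵀw = 0 (w isotropic) such that A_jw = 0 for all j. -/

import Mathlib

open Matrix

namespace Stmt2Aux

variable {m k : ℕ}

/-- Product of the matrices indexed by a list. -/
noncomputable def P (A : Fin k → Matrix (Fin m) (Fin m) ℂ) (l : List (Fin k)) :
    Matrix (Fin m) (Fin m) ℂ := (l.map A).prod

variable (A : Fin k → Matrix (Fin m) (Fin m) ℂ)

lemma P_nil : P A [] = 1 := rfl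

lemma P_cons (i : Fin k) (l : List (Fin k)) : P A (i :: l) = A i * P A l := by
  simp [P]

lemma P_append (l₁ l₂ : List (Fin k)) : P A (l₁ ++ l₂) = P A l₁ * P A l₂ := by
  simp [P]

lemma swap (hanti : ∀ i j, A i * A j + A j * A i = 0) (i j : Fin k) :
    A i * A j = -(A j * A i) :=
  eq_neg_of_add_eq_zero_left (hanti i j)

lemma sq_zero (hanti : ∀ i j, A i * A j + A j * A i = 0) (i : Fin k) :
    A i * A i = 0 := by
  have h2 : (2 : ℂ) • (A i * A i) = 0 := by
    rw [two_smul]; exact hanti i i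
  simpa using (smul_eq_zero.mp h2).resolve_left (by norm_num)

lemma move (hanti : ∀ i j, A i * A j + A j * A i = 0) (i : Fin k) (l : List (Fin k)) :
    A i * P A l = ((-1 : ℂ) ^ l.length) • (P A l * A i) := by
  induction l with
  | nil => simp [P_nil]
  | cons j t ih =>
    rw [P_cons, ← mul_assoc, swap A hanti i j, neg_mul, mul_assoc, ih,
      mul_smul_comm, ← smul_neg, List.length_cons, pow_succ, mul_smul, neg_one_smul,
      mul_assoc]

lemma mem_zero (hanti : ∀ i j, A i * A j + A j * A i = 0) (i : Fin k) (l : List (Fin k))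
    (hi : i ∈ l) : A i * P A l = 0 := by
  induction l with
  | nil => simp at hi
  | cons j t ih =>
    rw [P_cons, ← mul_assoc]
    rcases List.mem_cons.mp hi with h | h
    · subst h; rw [sq_zero A hanti, zero_mul]
    · rw [swap A hanti i j, neg_mul, mul_assoc, ih h, mul_zero, neg_zero]

lemma dup_zero (hanti : ∀ i j, A i * A j + A j * A i = 0) (l : List (Fin k))
    (hl : ¬ l.Nodup) : P A l = 0 := by
  induction l with
  | nil => simp at hl
  | cons j t ih =>
    rw [P_cons]
    by_cases h : j ∈ t
    · exact mem_zero A hanti j t h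
    · have : ¬ t.Nodup := fun hn => hl (List.nodup_cons.mpr ⟨h, hn⟩)
      rw [ih this, mul_zero]

lemma reverse_eq (hanti : ∀ i j, A i * A j + A j * A i = 0) (l : List (Fin k)) :
    ∃ c : ℂ, P A l.reverse = c • P A l := by
  induction l with
  | nil => exact ⟨1, by simp⟩
  | cons j t ih =>
    obtain ⟨c, hc⟩ := ih
    refine ⟨c * (-1 : ℂ) ^ t.length, ?_⟩
    have hmv : P A t * A j = ((-1 : ℂ) ^ t.length) • (A j * P A t) := by
      rw [move A hanti j t, smul_smul, ← pow_add, ← two_mul, pow_mul]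
      norm_num
    have h1 : P A [j] = A j := by simp [P]
    rw [List.reverse_cons, P_append, hc, smul_mul_assoc, h1, hmv, smul_smul,
      mul_comm c, P_cons, mul_comm ((-1 : ℂ) ^ t.length) c]

lemma transpose_P (hsymm : ∀ i, (A i).IsSymm) (l : List (Fin k)) :
    (P A l)ᵀ = P A l.reverse := by
  have h1 : List.map Matrix.transpose (List.map A l) = List.map A l := by
    rw [List.map_map]
    congr 1
    funext i
    exact hsymm i
  rw [P, Matrix.transpose_list_prod, h1, P]
  simp [List.map_reverse]

end Stmt2Aux

open Stmt2Aux in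
/-- If `A₁,…,A_k` are complex symmetric `m×m` matrices with `AᵢAⱼ + AⱼAᵢ = 0` for all `i, j`
and not all `Aᵢ` are zero, then there is a nonzero isotropic `w ∈ ℂ^m` with `Aⱼw = 0` for all `j`. -/
theorem stmt2 {m k : ℕ} (A : Fin k → Matrix (Fin m) (Fin m) ℂ)
    (hsymm : ∀ i, (A i).IsSymm)
    (hanti : ∀ i j, A i * A j + A j * A i = 0)
    (hne : ∃ i, A i ≠ 0) :
    ∃ w : Fin m → ℂ, w ≠ 0 ∧ (∑ i, w i * w i = 0) ∧ ∀ j, (A j).mulVec w = 0 := by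
  classical
  obtain ⟨i₀, hi₀⟩ := hne
  set S : Set ℕ := {n | ∃ l : List (Fin k), l.length = n ∧ P A l ≠ 0} with hSdef
  have h1 : (1 : ℕ) ∈ S := ⟨[i₀], rfl, by simpa [P_cons, P_nil] using hi₀⟩
  have hbdd : BddAbove S := by
    refine ⟨k, fun n hn => ?_⟩
    obtain ⟨l, hlen, hne'⟩ := hn
    by_contra h
    push_neg at h
    have hnodup : ¬ l.Nodup := by
      intro hnd
      have := List.Nodup.length_le_card hnd
      simp only [Fintype.card_fin] at this
      omega
    exact hne' (dup_zero A hanti l hnodup)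
  have hnS : sSup S ∈ S := Nat.sSup_mem ⟨1, h1⟩ hbdd
  set n := sSup S with hn
  obtain ⟨l, hlen, hPl⟩ := hnS
  have hn1 : 1 ≤ n := le_csSup hbdd h1
  -- a nonzero entry of the maximal product
  have hentry : ∃ r c, P A l r c ≠ 0 := by
    by_contra h
    push_neg at h
    exact hPl (Matrix.ext fun r c => h r c)
  obtain ⟨r, c, hrc⟩ := hentry
  set M := P A l with hM
  set w : Fin m → ℂ := M *ᵥ Pi.single c 1 with hw
  have hwr : w r = M r c := by simp [hw]
  have hlne : l ≠ [] := by
    intro h; rw [h] at hlen; simp at hlen; omega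
  have hsq : M * M = 0 := by
    rw [hM, ← P_append]
    apply dup_zero A hanti
    intro hnd
    obtain ⟨x, hx⟩ := List.exists_mem_of_ne_nil l hlne
    exact (List.nodup_append'.mp hnd).2.2 hx hx
  have hTM : Mᵀ * M = 0 := by
    obtain ⟨cc, hcc⟩ := reverse_eq A hanti l
    rw [hM, transpose_P A hsymm, hcc, smul_mul_assoc, ← hM, hsq, smul_zero]
  refine ⟨w, ?_, ?_, ?_⟩
  · intro h
    exact hrc (by rw [← hwr, h]; rfl)
  · show w ⬝ᵥ w = 0
    rw [hw, dotProduct_mulVec, vecMul_mulVec, hTM, vecMul_zero, zero_dotProduct]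
  · intro j
    have hz : P A (j :: l) = 0 := by
      by_contra h
      have : n + 1 ∈ S := ⟨j :: l, by simp [hlen], h⟩
      have := le_csSup hbdd this
      omega
    rw [hw, mulVec_mulVec, hM, ← P_cons, hz, zero_mulVec]
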